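/- Let n and e be positive integers with e ≤ n(n−1)/2. Then there exists a simple graph G with n vertices and e edges such that the number of 4-edge paths in G is at most 8·e⁴/n³ (equivalently, at most (1/2)·c⁴·n⁵ where c = 2e/n²). -/

import Mathlib

open SimpleGraph Finset

lemma aux_modsplit (n x : ℕ) (h : x < 2*n) :
    x % n = x ∧ x < n ∨ x % n = x - n ∧ n ≤ x := by
  rcases Nat.lt_or_ge x n with h1 | h1
  · exact Or.inl ⟨Nat.mod_eq_of_lt h1, h1⟩
  · right
    refine ⟨?_, h1⟩
    rw [Nat.mod_eq_sub_mod h1, Nat.mod_eq_of_lt (by omega)]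

lemma aux_div (n q i : ℕ) (hn : 0 < n) (hi : i < n) :
    (n * q + i) / n = q ∧ (n * q + i) % n = i := by
  constructor
  · rw [Nat.mul_add_div hn, Nat.div_eq_of_lt hi, add_zero]
  · rw [Nat.mul_add_mod, Nat.mod_eq_of_lt hi]


noncomputable def embedFin {α : Type*} [Fintype α] {m : ℕ} (h : Fintype.card α ≤ m) :
    α ↪ Fin m := (Fintype.equivFin α).toEmbedding.trans (Fin.castLEEmb h)

lemma tuple_count_le {V : Type*} [Fintype V] [DecidableEq V] (G : SimpleGraph V)
    [DecidableRel G.Adj] (D : ℕ)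
    (hD : ∀ v, (G.neighborFinset v).card ≤ D) :
    Nat.card {f : Fin 5 → V //
      Function.Injective f ∧ ∀ i : Fin 4, G.Adj (f i.castSucc) (f i.succ)} ≤
      (2 * Nat.card G.edgeSet) * (D - 1) ^ 3 := by
  classical
  by_cases hne : Nonempty {f : Fin 5 → V //
      Function.Injective f ∧ ∀ i : Fin 4, G.Adj (f i.castSucc) (f i.succ)}
  swap
  · haveI := not_nonempty_iff.mp hne
    rw [Nat.card_of_isEmpty]
    exact Nat.zero_le _
  obtain ⟨f0, hf0inj, hf0p⟩ := hne
  -- D ≥ 2 since f0 1 has two distinct neighbors f0 0 and f0 2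
  have hD2 : 2 ≤ D := by
    have h0 : f0 0 ∈ G.neighborFinset (f0 1) := by
      rw [mem_neighborFinset]; exact (hf0p 0).symm
    have h2 : f0 2 ∈ G.neighborFinset (f0 1) := by
      rw [mem_neighborFinset]; exact (hf0p 1)
    have hne02 : f0 0 ≠ f0 2 := fun h => by
      have := hf0inj h; exact absurd this (by decide)
    have : 1 < (G.neighborFinset (f0 1)).card :=
      Finset.one_lt_card.mpr ⟨f0 0, h0, f0 2, h2, hne02⟩
    exact le_trans this (hD (f0 1))
  haveI : Nonempty (Fin (D - 1)) := ⟨⟨0, by omega⟩⟩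
  -- the erased neighbor finsets
  set S : V → V → Finset V := fun v w =>
    if v ∈ G.neighborFinset w then (G.neighborFinset w).erase v else ∅ with hS
  have hScard : ∀ v w, (S v w).card ≤ D - 1 := by
    intro v w
    simp only [hS]
    by_cases h : v ∈ G.neighborFinset w
    · rw [if_pos h, Finset.card_erase_of_mem h]
      exact Nat.sub_le_sub_right (hD w) 1
    · rw [if_neg h]
      simp
  have hSmem : ∀ {v w u : V}, G.Adj v w → G.Adj w u → u ≠ v → u ∈ S v w := by
    intro v w u h1 h2 h3
    have hv : v ∈ G.neighborFinset w := by rw [mem_neighborFinset]; exact h1.symm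
    simp only [hS]
    rw [if_pos hv]
    rw [Finset.mem_erase, mem_neighborFinset]
    exact ⟨h3, h2⟩
  set ψ : V → V → V → Fin (D - 1) := fun v w u =>
    if h : u ∈ S v w then
      embedFin (le_trans (Fintype.card_coe (S v w)).le (hScard v w)) ⟨u, h⟩
    else Classical.arbitrary _ with hψ
  have hψinj : ∀ {v w u u' : V}, u ∈ S v w → u' ∈ S v w → ψ v w u = ψ v w u' → u = u' := by
    intro v w u u' h h' heq
    simp only [hψ, dif_pos h, dif_pos h'] at heq
    have := (embedFin (le_trans (Fintype.card_coe (S v w)).le (hScard v w))).injective heq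
    exact Subtype.ext_iff.mp this
  -- the injection
  set Φ : {f : Fin 5 → V //
      Function.Injective f ∧ ∀ i : Fin 4, G.Adj (f i.castSucc) (f i.succ)} →
      G.Dart × Fin (D-1) × Fin (D-1) × Fin (D-1) := fun x =>
    (⟨(x.1 0, x.1 1), x.2.2 0⟩,
     ψ (x.1 0) (x.1 1) (x.1 2),
     ψ (x.1 1) (x.1 2) (x.1 3),
     ψ (x.1 2) (x.1 3) (x.1 4)) with hΦ
  have hmem2 : ∀ (x : {f : Fin 5 → V //
      Function.Injective f ∧ ∀ i : Fin 4, G.Adj (f i.castSucc) (f i.succ)}),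
      x.1 2 ∈ S (x.1 0) (x.1 1) ∧ x.1 3 ∈ S (x.1 1) (x.1 2) ∧ x.1 4 ∈ S (x.1 2) (x.1 3) := by
    rintro ⟨f, hinj, hp⟩
    refine ⟨hSmem (hp 0) (hp 1) ?_, hSmem (hp 1) (hp 2) ?_, hSmem (hp 2) (hp 3) ?_⟩ <;>
      (intro h; have := hinj h; exact absurd this (by decide))
  have hΦinj : Function.Injective Φ := by
    rintro ⟨f, hfinj, hfp⟩ ⟨g, hginj, hgp⟩ heq
    have hf2 : f 2 ∈ S (f 0) (f 1) := (hmem2 ⟨f, hfinj, hfp⟩).1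
    have hf3 : f 3 ∈ S (f 1) (f 2) := (hmem2 ⟨f, hfinj, hfp⟩).2.1
    have hf4 : f 4 ∈ S (f 2) (f 3) := (hmem2 ⟨f, hfinj, hfp⟩).2.2
    have hg2 : g 2 ∈ S (g 0) (g 1) := (hmem2 ⟨g, hginj, hgp⟩).1
    have hg3 : g 3 ∈ S (g 1) (g 2) := (hmem2 ⟨g, hginj, hgp⟩).2.1
    have hg4 : g 4 ∈ S (g 2) (g 3) := (hmem2 ⟨g, hginj, hgp⟩).2.2
    simp only [hΦ, Prod.mk.injEq, Dart.ext_iff, Prod.ext_iff] at heq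
    obtain ⟨⟨h0, h1⟩, hc2, hc3, hc4⟩ := heq
    rw [← h0, ← h1] at hc2 hg2
    have h2 : f 2 = g 2 := hψinj hf2 hg2 hc2
    rw [← h1, ← h2] at hc3 hg3
    have h3 : f 3 = g 3 := hψinj hf3 hg3 hc3
    rw [← h2, ← h3] at hc4 hg4
    have h4 : f 4 = g 4 := hψinj hf4 hg4 hc4
    apply Subtype.ext
    funext i
    fin_cases i <;> assumption
  calc Nat.card {f : Fin 5 → V //
      Function.Injective f ∧ ∀ i : Fin 4, G.Adj (f i.castSucc) (f i.succ)}
      ≤ Nat.card (G.Dart × Fin (D-1) × Fin (D-1) × Fin (D-1)) :=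
        Nat.card_le_card_of_injective Φ hΦinj
    _ = (2 * Nat.card G.edgeSet) * (D - 1) ^ 3 := by
        rw [Nat.card_eq_fintype_card, Fintype.card_prod, Fintype.card_prod, Fintype.card_prod,
          G.dart_card_eq_twice_card_edges, Fintype.card_fin, G.edgeFinset_card,
          Nat.card_eq_fintype_card]
        ring

/-- The number of 4-edge paths in `G` (subgraphs isomorphic to the path with 4 edges):
each such path corresponds to exactly two injective tuples (its two directions). -/
noncomputable def pathCount4 {V : Type*} (G : SimpleGraph V) : ℕ :=
  Nat.card {f : Fin 5 → V //
    Function.Injective f ∧ ∀ i : Fin 4, G.Adj (f i.castSucc) (f i.succ)} / 2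

set_option maxHeartbeats 1000000 in
theorem exists_graph_few_paths (n e : ℕ) (hn : 0 < n) (he : 0 < e)
    (hle : 2 * e ≤ n * (n - 1)) :
    ∃ G : SimpleGraph (Fin n), Nat.card G.edgeSet = e ∧
      (pathCount4 G : ℝ) ≤ 8 * (e : ℝ) ^ 4 / (n : ℝ) ^ 3 := by
  classical
  have hn2 : 2 ≤ n := by
    by_contra h
    push_neg at h
    interval_cases n <;> omega
  set k := e / n with hkdef
  set r := e % n with hrdef
  have hkr : n * k + r = e := Nat.div_add_mod e n
  have hrn : r < n := Nat.mod_lt e hn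
  have hmulsub : n * (n-1) + n = n * n := by
    rcases n with _ | m
    · omega
    · simp only [Nat.add_sub_cancel]
      ring
  -- 2k+1 ≤ n
  have h2k : 2 * k + 1 ≤ n := by
    by_contra h
    push_neg at h
    have hm1 : n * n ≤ n * (2*k) := Nat.mul_le_mul_left n (by omega)
    have hm2 : n * (2*k) = 2*(n*k) := by ring
    omega
  have hA2 : 1 ≤ r → 2*k+2 ≤ n := by
    intro hr1
    by_contra h
    push_neg at h
    have hm1 : n * n ≤ n * (2*k+1) := Nat.mul_le_mul_left n (by omega)
    have hm2 : n * (2*k+1) = 2*(n*k) + n := by ring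
    omega
  have hB : ¬ (2*r ≤ n) → 2*(k+1) ≠ n := by
    intro hbr hc
    have hm1 : n * (2*(k+1)) = n * n := by rw [hc]
    have hm2 : n * (2*(k+1)) = 2*(n*k) + 2*n := by ring
    omega
  set dA : ℕ := if 2*r ≤ n then max (k+1) r else k+1 with hdAdef
  set D : ℕ := if 2*r ≤ n then 2*k+1 else 2*k+2 with hDdef
  have hdA1 : k + 1 ≤ dA := by
    rw [hdAdef]; split
    · exact le_max_left _ _
    · exact le_rfl
  have hdA2 : 1 ≤ r → dA + k + 1 ≤ n := by
    intro hr1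
    have h1 := hA2 hr1
    rw [hdAdef]; split
    · rename_i hbr
      rcases Nat.le_total r (k+1) with h|h
      · rw [max_eq_left h]; omega
      · rw [max_eq_right h]; omega
    · omega
  have hdAr : 2*r ≤ n → r ≤ dA := by
    intro hbr; rw [hdAdef, if_pos hbr]; exact le_max_right _ _
  have hnw : 1 ≤ r → 2*r ≤ n → r + dA ≤ n := by
    intro hr1 hbr
    have h1 := hA2 hr1
    rw [hdAdef, if_pos hbr]
    rcases Nat.le_total r (k+1) with h|h
    · rw [max_eq_left h]; omega
    · rw [max_eq_right h]; omega
  have hBdA : ¬ (2*r ≤ n) → dA = k+1 := by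
    intro hbr; rw [hdAdef, if_neg hbr]
  have hDn : (D - 1) * n ≤ 2 * e := by
    by_cases hbr : 2*r ≤ n
    · rw [hDdef, if_pos hbr]
      have h1 : (2*k+1-1) * n = 2*(n*k) := by
        have h2 : 2*k+1-1 = 2*k := by omega
        rw [h2]; ring
      omega
    · rw [hDdef, if_neg hbr]
      have h1 : (2*k+2-1) * n = 2*(n*k) + n := by
        have h2 : 2*k+2-1 = 2*k+1 := by omega
        rw [h2]; ring
      push_neg at hbr
      omega
  -- the edge enumeration
  set F : ℕ → Sym2 (Fin n) := fun t =>
    s(⟨t % n, Nat.mod_lt _ hn⟩,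
      ⟨(t % n + (if t / n < k then t / n + 1 else dA)) % n, Nat.mod_lt _ hn⟩) with hFdef
  have hlayer : ∀ t, t < e → ∃ q i, t = n * q + i ∧ i < n ∧
      (q < k ∨ (q = k ∧ 1 ≤ r ∧ i < r)) := by
    intro t ht
    refine ⟨t / n, t % n, (Nat.div_add_mod t n).symm, Nat.mod_lt _ hn, ?_⟩
    rcases Nat.lt_or_ge (t/n) k with h | h
    · exact Or.inl h
    · right
      have h2 := Nat.div_add_mod t n
      have h3 : t / n ≤ k := by
        by_contra hc
        push_neg at hc
        have h4 : n * (k+1) ≤ n * (t/n) := Nat.mul_le_mul_left n hc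
        have h5 : n * (k+1) = n*k + n := by ring
        have h6 : n * (t/n) ≤ t := Nat.mul_div_le t n
        omega
      have hq : t / n = k := le_antisymm h3 h
      rw [hq] at h2
      exact ⟨hq, by omega, by omega⟩
  have hF : ∀ q i (h : i < n), F (n*q+i) =
      s((⟨i, h⟩ : Fin n),
        (⟨(i + (if q < k then q + 1 else dA)) % n, Nat.mod_lt _ hn⟩ : Fin n)) := by
    intro q i h
    rw [hFdef]
    simp only [(aux_div n q i hn h).1, (aux_div n q i hn h).2]
  -- non-diagonality
  have hnd : ∀ t, t < e → ¬ (F t).IsDiag := by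
    intro t ht
    obtain ⟨q, i, rfl, hi, hcase⟩ := hlayer t ht
    rw [hF q i hi, Sym2.mk_isDiag_iff]
    intro hEq
    have hv : i = (i + (if q < k then q + 1 else dA)) % n := congrArg Fin.val hEq
    rcases hcase with hq | ⟨hq, hr1, hir⟩
    · rw [if_pos hq] at hv
      rcases aux_modsplit n (i + (q+1)) (by omega) with ⟨h1, h2⟩ | ⟨h1, h2⟩ <;> omega
    · rw [if_neg (by omega)] at hv
      have h1 := hdA2 hr1
      rcases aux_modsplit n (i + dA) (by omega) with ⟨h1', h2'⟩ | ⟨h1', h2'⟩ <;> omega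
  -- injectivity of F on range e
  have hFinj : ∀ t t', t < e → t' < e → F t = F t' → t = t' := by
    intro t t' ht ht'
    obtain ⟨q, i, rfl, hi, hc⟩ := hlayer t ht
    obtain ⟨q', i', rfl, hi', hc'⟩ := hlayer t' ht'
    rw [hF q i hi, hF q' i' hi', Sym2.eq_iff]
    simp only [Fin.mk.injEq]
    intro hEq
    rcases hc with hq | ⟨hq, hr1, hir⟩ <;> rcases hc' with hq' | ⟨hq', hr1', hir'⟩
    · -- both full layers
      rw [if_pos hq] at hEq
      rw [if_pos hq'] at hEq
      have hgoal : q = q' ∧ i = i' := by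
        rcases aux_modsplit n (i + (q+1)) (by omega) with ⟨h1, h2⟩ | ⟨h1, h2⟩ <;>
        rcases aux_modsplit n (i' + (q'+1)) (by omega) with ⟨h1', h2'⟩ | ⟨h1', h2'⟩ <;>
        omega
      obtain ⟨rfl, rfl⟩ := hgoal
      rfl
    · -- full / partial
      rw [if_pos hq] at hEq
      rw [if_neg (by omega)] at hEq
      have hb1 := hdA1
      have hb2 := hdA2 hr1'
      exfalso
      rcases aux_modsplit n (i + (q+1)) (by omega) with ⟨h1, h2⟩ | ⟨h1, h2⟩ <;>
      rcases aux_modsplit n (i' + dA) (by omega) with ⟨h1', h2'⟩ | ⟨h1', h2'⟩ <;>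
      omega
    · -- partial / full
      rw [if_neg (by omega)] at hEq
      rw [if_pos hq'] at hEq
      have hb1 := hdA1
      have hb2 := hdA2 hr1
      exfalso
      rcases aux_modsplit n (i + dA) (by omega) with ⟨h1, h2⟩ | ⟨h1, h2⟩ <;>
      rcases aux_modsplit n (i' + (q'+1)) (by omega) with ⟨h1', h2'⟩ | ⟨h1', h2'⟩ <;>
      omega
    · -- both partial
      rw [if_neg (by omega), if_neg (by omega)] at hEq
      have hb1 := hdA1
      have hb2 := hdA2 hr1
      have hgoal : i = i' := by
        by_cases hbr : 2*r ≤ n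
        · have h3 := hdAr hbr
          rcases aux_modsplit n (i + dA) (by omega) with ⟨h1, h2⟩ | ⟨h1, h2⟩ <;>
          rcases aux_modsplit n (i' + dA) (by omega) with ⟨h1', h2'⟩ | ⟨h1', h2'⟩ <;>
          omega
        · have h3 := hB hbr
          have h4 := hBdA hbr
          rcases aux_modsplit n (i + dA) (by omega) with ⟨h1, h2⟩ | ⟨h1, h2⟩ <;>
          rcases aux_modsplit n (i' + dA) (by omega) with ⟨h1', h2'⟩ | ⟨h1', h2'⟩ <;>
          omega
      rw [hq, hq', hgoal]
  -- degree-by-index count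
  have hdegcount : ∀ v : Fin n,
      ((Finset.range e).filter (fun t => v ∈ F t)).card ≤ D := by
    intro v
    set g : ℕ → ℕ := fun t => 2*(t/n) + (if v.val = t % n then 0 else 1) with hgdef
    have hmem : ∀ t, t < e → v ∈ F t → ∃ q i, t = n*q+i ∧ i < n ∧
        (q < k ∨ (q = k ∧ 1 ≤ r ∧ i < r)) ∧
        (v.val = i ∨ v.val = (i + (if q < k then q+1 else dA)) % n) := by
      intro t ht hv
      obtain ⟨q, i, rfl, hi, hcase⟩ := hlayer t ht
      refine ⟨q, i, rfl, hi, hcase, ?_⟩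
      rw [hF q i hi] at hv
      rcases Sym2.mem_iff.mp hv with h | h
      · left; exact congrArg Fin.val h
      · right; exact congrArg Fin.val h
    have hg : ∀ q i, i < n → g (n*q+i) = 2*q + (if v.val = i then 0 else 1) := by
      intro q i hi
      rw [hgdef]
      simp only [(aux_div n q i hn hi).1, (aux_div n q i hn hi).2]
    have hinj : Set.InjOn g ↑((Finset.range e).filter (fun t => v ∈ F t)) := by
      intro t ht t' ht' hEq
      rw [Finset.mem_coe, mem_filter, mem_range] at ht ht'
      obtain ⟨q, i, rfl, hi, hcase, hvm⟩ := hmem t ht.1 ht.2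
      obtain ⟨q', i', rfl, hi', hcase', hvm'⟩ := hmem t' ht'.1 ht'.2
      rw [hg q i hi, hg q' i' hi'] at hEq
      by_cases hb : v.val = i <;> by_cases hb' : v.val = i'
      · rw [if_pos hb, if_pos hb'] at hEq
        have hqq : q = q' := by omega
        subst hqq
        omega
      · rw [if_pos hb, if_neg hb'] at hEq
        omega
      · rw [if_neg hb, if_pos hb'] at hEq
        omega
      · rw [if_neg hb, if_neg hb'] at hEq
        have hqq : q = q' := by omega
        subst hqq
        have hv1 : v.val = (i + (if q < k then q+1 else dA)) % n := hvm.resolve_left hb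
        have hv2 : v.val = (i' + (if q < k then q+1 else dA)) % n := hvm'.resolve_left hb'
        have hii : i = i' := by
          rcases hcase with hq | ⟨hq, hr1, hir⟩
          · rw [if_pos hq] at hv1 hv2
            rcases aux_modsplit n (i + (q+1)) (by omega) with ⟨h1, h2⟩ | ⟨h1, h2⟩ <;>
            rcases aux_modsplit n (i' + (q+1)) (by omega) with ⟨h1', h2'⟩ | ⟨h1', h2'⟩ <;>
            omega
          · rw [if_neg (by omega)] at hv1 hv2
            have hb1 := hdA1
            have hb2 := hdA2 hr1
            rcases aux_modsplit n (i + dA) (by omega) with ⟨h1, h2⟩ | ⟨h1, h2⟩ <;>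
            rcases aux_modsplit n (i' + dA) (by omega) with ⟨h1', h2'⟩ | ⟨h1', h2'⟩ <;>
            omega
        rw [hii]
    by_cases hbr : 2*r ≤ n
    · -- branch A : D = 2k+1, image avoids one value
      have hDval : D = 2*k+1 := by rw [hDdef, if_pos hbr]
      set x : ℕ := if v.val < r then 2*k+1 else 2*k with hxdef
      have hxmem : x ∈ range (2*k+2) := by
        rw [hxdef]; split <;> (rw [mem_range]; omega)
      have hmaps : ∀ t ∈ (Finset.range e).filter (fun t => v ∈ F t),
          g t ∈ (range (2*k+2)).erase x := by
        intro t ht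
        rw [mem_filter, mem_range] at ht
        obtain ⟨q, i, rfl, hi, hcase, hvm⟩ := hmem t ht.1 ht.2
        rw [hg q i hi, Finset.mem_erase, mem_range, hxdef]
        rcases hcase with hq | ⟨hq, hr1, hir⟩
        · constructor
          · split <;> (split <;> omega)
          · split <;> omega
        · -- partial layer
          rw [if_neg (by omega)] at hvm
          have hb1 := hdA1
          have hnw1 := hnw hr1 hbr
          have hrdA := hdAr hbr
          have hmod : (i + dA) % n = i + dA := Nat.mod_eq_of_lt (by omega)
          rw [hmod] at hvm
          rcases hvm with hv1 | hv1
          · rw [if_pos hv1]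
            constructor
            · split <;> omega
            · omega
          · have hne : v.val ≠ i := by omega
            rw [if_neg hne]
            constructor
            · split <;> omega
            · omega
      have := Finset.card_le_card_of_injOn g hmaps hinj
      rw [Finset.card_erase_of_mem hxmem, Finset.card_range] at this
      omega
    · -- branch B : D = 2k+2
      have hDval : D = 2*k+2 := by rw [hDdef, if_neg hbr]
      have hmaps : ∀ t ∈ (Finset.range e).filter (fun t => v ∈ F t),
          g t ∈ range (2*k+2) := by
        intro t ht
        rw [mem_filter, mem_range] at ht
        obtain ⟨q, i, rfl, hi, hcase, hvm⟩ := hmem t ht.1 ht.2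
        rw [hg q i hi, mem_range]
        rcases hcase with hq | ⟨hq, hr1, hir⟩ <;> (split <;> omega)
      have := Finset.card_le_card_of_injOn g hmaps hinj
      rw [Finset.card_range] at this
      omega
  -- the graph
  set Efin := (Finset.range e).image F with hEdef
  set G : SimpleGraph (Fin n) := SimpleGraph.fromEdgeSet ↑Efin with hGdef
  haveI : DecidableRel G.Adj := Classical.decRel _
  have hAdj : ∀ a b : Fin n, G.Adj a b ↔ s(a,b) ∈ Efin ∧ a ≠ b := by
    intro a b
    rw [hGdef, SimpleGraph.fromEdgeSet_adj]
    rw [Finset.mem_coe]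
  have hdeg : ∀ v : Fin n, (G.neighborFinset v).card ≤ D := by
    intro v
    refine le_trans ?_ (hdegcount v)
    set cu : Fin n → ℕ := fun u =>
      if h : ∃ t, t ∈ Finset.range e ∧ F t = s(v, u) then h.choose else 0 with hcudef
    have hex : ∀ u ∈ G.neighborFinset v, ∃ t, t ∈ Finset.range e ∧ F t = s(v, u) := by
      intro u hu
      rw [mem_neighborFinset, hAdj] at hu
      obtain ⟨t, ht1, ht2⟩ := Finset.mem_image.mp hu.1
      exact ⟨t, ht1, ht2⟩
    apply Finset.card_le_card_of_injOn cu
    · intro u hu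
      have h := hex u hu
      rw [hcudef]
      simp only [dif_pos h]
      have hspec := h.choose_spec
      rw [Finset.mem_coe, mem_filter]
      refine ⟨hspec.1, ?_⟩
      rw [hspec.2]
      exact Sym2.mem_mk_left v u
    · intro u hu u' hu' hEq
      have h := hex u (Finset.mem_coe.mp hu)
      have h' := hex u' (Finset.mem_coe.mp hu')
      rw [hcudef] at hEq
      simp only [dif_pos h, dif_pos h'] at hEq
      have hs := h.choose_spec
      have hs' := h'.choose_spec
      rw [hEq] at hs
      have hss : s(v, u) = s(v, u') := hs.2.symm.trans hs'.2
      rcases Sym2.eq_iff.mp hss with ⟨_, h2⟩ | ⟨h1, h2⟩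
      · exact h2
      · exact h2.trans h1
  -- edge count
  have hEcard : Efin.card = e := by
    rw [hEdef, Finset.card_image_of_injOn, Finset.card_range]
    intro t ht t' ht' hEq
    exact hFinj t t' (mem_range.mp ht) (mem_range.mp ht') hEq
  have hES : G.edgeSet = (↑Efin : Set (Sym2 (Fin n))) := by
    rw [hGdef, SimpleGraph.edgeSet_fromEdgeSet]
    ext y
    simp only [Set.mem_diff, Set.mem_setOf_eq, Finset.mem_coe]
    constructor
    · exact fun h => h.1
    · intro hy
      refine ⟨hy, ?_⟩
      obtain ⟨t, ht1, ht2⟩ := Finset.mem_image.mp hy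
      rw [← ht2]
      exact hnd t (mem_range.mp ht1)
  have hNcard : Nat.card G.edgeSet = e := by
    rw [hES, Nat.card_coe_set_eq, Set.ncard_coe_finset, hEcard]
  refine ⟨G, hNcard, ?_⟩
  have hT := tuple_count_le G D hdeg
  rw [hNcard, mul_assoc] at hT
  have hp : pathCount4 G ≤ e * (D-1)^3 := by
    unfold pathCount4
    calc Nat.card {f : Fin 5 → Fin n //
          Function.Injective f ∧ ∀ i : Fin 4, G.Adj (f i.castSucc) (f i.succ)} / 2
        ≤ (2 * (e * (D-1)^3)) / 2 := Nat.div_le_div_right hT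
      _ = e * (D-1)^3 := Nat.mul_div_cancel_left _ (by norm_num)
  have hnR : (0:ℝ) < (n:ℝ) := by exact_mod_cast hn
  have hcast : ((D-1 : ℕ) : ℝ) ≤ 2 * (e:ℝ) / (n:ℝ) := by
    rw [le_div_iff₀ hnR]
    exact_mod_cast hDn
  calc (pathCount4 G : ℝ) ≤ (e:ℝ) * ((D-1:ℕ):ℝ)^3 := by exact_mod_cast hp
    _ ≤ (e:ℝ) * (2*(e:ℝ)/(n:ℝ))^3 := by
        apply mul_le_mul_of_nonneg_left _ (by positivity)
        exact pow_le_pow_left₀ (Nat.cast_nonneg _) hcast 3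
    _ = 8 * (e:ℝ)^4 / (n:ℝ)^3 := by
        field_simp
        ring
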